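/- Let λ ∈ ℝ and let (Y_j)_{j≥1} be i.i.d. real random variables with all moments finite. For all integers n ≥ k ≥ 0, the probabilistic degenerate Stirling numbers of the second kind admit the multinomial representation: {n \brace k}_{Y,λ} = (1/k!) Σ_{l₁+⋯+l_k = n, each lᵢ ≥ 1} C(n; l₁,…,l_k) E[∏_{i=1}^{k} (Y_i)_{l_i,λ}], where the sum is over all k-tuples (l₁,…,l_k) of positive integers with l₁+⋯+l_k = n and C(n; l₁,…,l_k) = n!/(l₁!⋯l_k!) is the multinomial coefficient. -/

import Mathlib

open MeasureTheory ProbabilityTheory Finset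

/-- The degenerate falling factorial `(x)_{n,λ} = ∏_{i=0}^{n-1} (x - iλ)`. -/
noncomputable def degFall (lam x : ℝ) (n : ℕ) : ℝ :=
  ∏ i ∈ Finset.range n, (x - (i : ℝ) * lam)

/-- The probabilistic degenerate Stirling numbers of the second kind associated with `Y`:
`{n \brace k}_{Y,λ} = (1/k!) ∑_{j=0}^{k} (-1)^{k-j} C(k,j) E[(S_j)_{n,λ}]`. -/
noncomputable def probDegStirling {Ω : Type*} [MeasurableSpace Ω] (μ : Measure Ω)
    (Y : ℕ → Ω → ℝ) (lam : ℝ) (n k : ℕ) : ℝ :=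
  (1 / (Nat.factorial k : ℝ)) * ∑ j ∈ Finset.range (k + 1),
    (-1 : ℝ) ^ (k - j) * (Nat.choose k j : ℝ) *
      ∫ ω, degFall lam (∑ i ∈ Finset.range j, Y i ω) n ∂μ

section AuxDet

lemma degFall_succ (lam x : ℝ) (n : ℕ) :
    degFall lam x (n + 1) = degFall lam x n * (x - n * lam) :=
  Finset.prod_range_succ _ _

lemma measurable_degFall (lam : ℝ) (n : ℕ) : Measurable (fun x : ℝ => degFall lam x n) :=
  Finset.measurable_prod _ fun _ _ => measurable_id.sub_const _

lemma abs_degFall_le (lam x : ℝ) (n : ℕ) :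
    |degFall lam x n| ≤ (|x| + n * |lam|) ^ n := by
  rw [degFall, Finset.abs_prod]
  calc ∏ i ∈ Finset.range n, |x - (i : ℝ) * lam|
      ≤ ∏ _i ∈ Finset.range n, (|x| + n * |lam|) := by
        refine Finset.prod_le_prod (fun i _ => abs_nonneg _) (fun i hi => ?_)
        have h1 : |x - (i : ℝ) * lam| ≤ |x| + |(i : ℝ) * lam| := abs_sub _ _
        have h2 : |(i : ℝ) * lam| = (i : ℝ) * |lam| := by
          rw [abs_mul, Nat.abs_cast]
        have h3 : (i : ℝ) ≤ n := by
          exact_mod_cast (Finset.mem_range.mp hi).le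
        nlinarith [abs_nonneg lam]
    _ = (|x| + n * |lam|) ^ n := by rw [Finset.prod_const, Finset.card_range]

lemma degFall_add (lam x y : ℝ) (n : ℕ) :
    degFall lam (x + y) n = ∑ ij ∈ Finset.HasAntidiagonal.antidiagonal n,
      (n.choose ij.1 : ℝ) * (degFall lam x ij.1 * degFall lam y ij.2) := by
  induction n with
  | zero => simp [degFall]
  | succ n ih =>
    rw [degFall_succ, ih, Finset.sum_antidiagonal_choose_succ_mul
      (fun a b => degFall lam x a * degFall lam y b) n, Finset.sum_mul,
      ← Finset.sum_add_distrib]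
    refine Finset.sum_congr rfl fun ij hij => ?_
    have hsum : ij.1 + ij.2 = n := Finset.HasAntidiagonal.mem_antidiagonal.mp hij
    have h3 : (n.choose ij.2 : ℝ) = n.choose ij.1 := by
      have h2 : ij.2 = n - ij.1 := by omega
      have h1 : ij.1 ≤ n := by omega
      rw [h2, Nat.choose_symm h1]
    have h4 : ((ij.1 : ℝ)) + ij.2 = n := by exact_mod_cast congrArg (Nat.cast : ℕ → ℝ) hsum
    rw [degFall_succ, degFall_succ, h3,
      show x + y - (n : ℝ) * lam = (x - ij.1 * lam) + (y - ij.2 * lam) by rw [← h4]; ring]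
    ring

lemma degFall_sum {ι : Type*} [DecidableEq ι] (lam : ℝ) (s : Finset ι) (x : ι → ℝ) (n : ℕ) :
    degFall lam (∑ i ∈ s, x i) n = ∑ t ∈ s.piAntidiag n,
      (Nat.multinomial s t : ℝ) * ∏ i ∈ s, degFall lam (x i) (t i) := by
  induction s using Finset.cons_induction generalizing n with
  | empty =>
    rcases Nat.eq_zero_or_pos n with rfl | hn
    · simp [degFall]
    · rw [Finset.sum_empty, piAntidiag_empty_of_ne_zero hn.ne', Finset.sum_empty]
      refine Finset.prod_eq_zero (Finset.mem_range.mpr hn) ?_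
      simp
  | cons a s has ih =>
    rw [Finset.sum_cons, degFall_add, piAntidiag_cons, sum_disjiUnion]
    simp only [sum_map, addRightEmbedding_apply]
    refine Finset.sum_congr rfl fun p hp => ?_
    rw [ih]
    simp only [Finset.mul_sum]
    refine Finset.sum_congr rfl fun t ht => ?_
    rw [mem_piAntidiag] at ht
    have hta : t a = 0 := by
      by_contra h'; exact has (ht.2 a h')
    have h1 : (t + fun j => if j = a then p.1 else 0) a = p.1 := by simp [hta]
    have h2 : ∀ i ∈ s, (t + fun j => if j = a then p.1 else 0) i = t i := fun i hi => by
      simp [ne_of_mem_of_not_mem hi has]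
    have hm : (Nat.multinomial (cons a s has) (t + fun j => if j = a then p.1 else 0) : ℝ)
        = (n.choose p.1 : ℝ) * Nat.multinomial s t := by
      rw [Nat.multinomial_cons]
      have hs2 : ∑ i ∈ s, (t + fun j => if j = a then p.1 else 0) i = p.2 := by
        rw [Finset.sum_congr rfl h2, ht.1]
      rw [h1, hs2, Nat.multinomial_congr h2,
        show p.1 + p.2 = n from Finset.HasAntidiagonal.mem_antidiagonal.mp hp]
      push_cast; ring
    rw [Finset.prod_cons, h1, hm,
      Finset.prod_congr rfl (fun i hi => congrArg (degFall lam (x i)) (h2 i hi))]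
    ring

end AuxDet

section AuxPS

/-- Exponential generating function of a sequence. -/
noncomputable def egf (h : ℕ → ℝ) : PowerSeries ℝ := PowerSeries.mk fun m => h m / m.factorial

lemma coeff_egf_pow {ι : Type*} [DecidableEq ι] (h : ℕ → ℝ) (s : Finset ι) (N : ℕ) :
    PowerSeries.coeff N ((egf h) ^ s.card) =
      ∑ t ∈ s.piAntidiag N, ∏ i ∈ s, h (t i) / (t i).factorial := by
  induction s using Finset.cons_induction generalizing N with
  | empty =>
    rcases Nat.eq_zero_or_pos N with rfl | hN
    · simp
    · simp [piAntidiag_empty_of_ne_zero hN.ne', PowerSeries.coeff_one, hN.ne']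
  | cons a s has ih =>
    rw [card_cons, pow_succ', PowerSeries.coeff_mul, piAntidiag_cons, sum_disjiUnion]
    simp only [sum_map, addRightEmbedding_apply]
    refine Finset.sum_congr rfl fun p hp => ?_
    rw [ih, egf, PowerSeries.coeff_mk, Finset.mul_sum]
    refine Finset.sum_congr rfl fun t ht => ?_
    rw [mem_piAntidiag] at ht
    have hta : t a = 0 := by by_contra h'; exact has (ht.2 a h')
    have h1 : (t + fun j => if j = a then p.1 else 0) a = p.1 := by simp [hta]
    have h2 : ∀ i ∈ s, (t + fun j => if j = a then p.1 else 0) i = t i := fun i hi => by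
      simp [ne_of_mem_of_not_mem hi has]
    rw [Finset.prod_cons, h1,
      Finset.prod_congr rfl (fun i hi => by rw [h2 i hi] :
        ∀ i ∈ s, h ((t + fun j => if j = a then p.1 else 0) i)
          / (((t + fun j => if j = a then p.1 else 0) i).factorial : ℝ)
          = h (t i) / (t i).factorial)]

lemma multinomial_mul_prod_eq {ι : Type*} (s : Finset ι) (t : ι → ℕ) (w : ι → ℝ) (n : ℕ)
    (hsum : ∑ i ∈ s, t i = n) :
    (Nat.multinomial s t : ℝ) * ∏ i ∈ s, w i =
      (n.factorial : ℝ) * ∏ i ∈ s, (w i / (t i).factorial) := by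
  have hspec := Nat.multinomial_spec s t
  rw [hsum] at hspec
  have key : (∏ i ∈ s, ((t i).factorial : ℝ)) * (Nat.multinomial s t : ℝ) = n.factorial := by
    exact_mod_cast congrArg (Nat.cast : ℕ → ℝ) hspec
  have hne : (∏ i ∈ s, ((t i).factorial : ℝ)) ≠ 0 :=
    Finset.prod_ne_zero_iff.mpr fun i _ => Nat.cast_ne_zero.mpr (t i).factorial_ne_zero
  rw [Finset.prod_div_distrib, ← key]
  field_simp

lemma egf_sub_one (g : ℕ → ℝ) (hg0 : g 0 = 1) :
    egf g - 1 = egf (fun m => if m = 0 then 0 else g m) := by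
  ext N
  simp only [map_sub, egf, PowerSeries.coeff_mk, PowerSeries.coeff_one]
  rcases Nat.eq_zero_or_pos N with rfl | hN
  · simp [hg0]
  · simp [hN.ne']

open PowerSeries in
lemma coeff_sub_one_pow (g : ℕ → ℝ) (k N : ℕ) :
    PowerSeries.coeff N ((egf g - 1) ^ k) =
      ∑ j ∈ Finset.range (k + 1),
        (-1 : ℝ) ^ (k - j) * (k.choose j : ℝ) * PowerSeries.coeff N ((egf g) ^ j) := by
  rw [sub_pow, map_sum]
  refine Finset.sum_congr rfl fun j hj => ?_
  have hj' : j ≤ k := by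
    have := Finset.mem_range.mp hj; omega
  have hsign : (-1 : ℝ⟦X⟧) ^ (j + k) = (-1) ^ (k - j) := by
    conv_lhs => rw [show j + k = (k - j) + 2 * j by omega]
    rw [pow_add, pow_mul]
    simp
  have hC : ((-1 : ℝ⟦X⟧) ^ (k - j) * ((k.choose j : ℕ) : ℝ⟦X⟧))
      = PowerSeries.C ((-1) ^ (k - j) * (k.choose j : ℝ)) := by
    rw [map_mul, map_pow, map_neg, map_one, map_natCast]
  calc PowerSeries.coeff N ((-1 : ℝ⟦X⟧) ^ (j + k) * (egf g) ^ j * 1 ^ (k - j) * ((k.choose j : ℕ) : ℝ⟦X⟧))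
      = PowerSeries.coeff N (((-1 : ℝ⟦X⟧) ^ (k - j) * ((k.choose j : ℕ) : ℝ⟦X⟧)) * (egf g) ^ j) := by
        rw [hsign]; ring_nf
    _ = (-1 : ℝ) ^ (k - j) * (k.choose j : ℝ) * PowerSeries.coeff N ((egf g) ^ j) := by
        rw [hC, PowerSeries.coeff_C_mul]

lemma prod_if_zero_filter {ι : Type*} [DecidableEq ι] [Fintype ι] (g : ℕ → ℝ) (N : ℕ) :
    ∑ t ∈ (Finset.univ : Finset ι).piAntidiag N,
        ∏ i, (if t i = 0 then (0:ℝ) else g (t i)) / (t i).factorial =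
      ∑ t ∈ ((Finset.univ : Finset ι).piAntidiag N).filter (fun t => ∀ i, 0 < t i),
        ∏ i, g (t i) / (t i).factorial := by
  rw [← Finset.sum_filter_add_sum_filter_not _ (fun t => ∀ i, 0 < t i)]
  have h2 : ∑ t ∈ ((Finset.univ : Finset ι).piAntidiag N).filter (fun t => ¬ ∀ i, 0 < t i),
      ∏ i, (if t i = 0 then (0:ℝ) else g (t i)) / (t i).factorial = 0 := by
    refine Finset.sum_eq_zero fun t ht => ?_
    obtain ⟨i, hi⟩ := not_forall.mp (Finset.mem_filter.mp ht).2
    have h0 : t i = 0 := by omega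
    exact Finset.prod_eq_zero (Finset.mem_univ i) (by simp [h0])
  rw [h2, add_zero]
  refine Finset.sum_congr rfl fun t ht => ?_
  refine Finset.prod_congr rfl fun i _ => ?_
  have := (Finset.mem_filter.mp ht).2 i
  rw [if_neg this.ne']

end AuxPS

section AuxMeas

variable {Ω : Type*} [MeasurableSpace Ω] {μ : Measure Ω} [IsProbabilityMeasure μ]
  {Y : ℕ → Ω → ℝ}

omit [IsProbabilityMeasure μ] in
lemma integrable_degFall_comp (hmeas : ∀ i, Measurable (Y i))
    (hident : ∀ i, IdentDistrib (Y i) (Y 0) μ μ)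
    (hmom : ∀ n : ℕ, Integrable (fun ω => |Y 0 ω| ^ n) μ) (lam : ℝ) (i m : ℕ) :
    Integrable (fun ω => degFall lam (Y i ω) m) μ := by
  have hid : IdentDistrib (fun ω => degFall lam (Y i ω) m) (fun ω => degFall lam (Y 0 ω) m) μ μ :=
    (hident i).comp (measurable_degFall lam m)
  rw [hid.integrable_iff]
  have hG : Integrable (fun ω => ∑ p ∈ Finset.range (m + 1),
      |Y 0 ω| ^ p * ((m : ℝ) * |lam|) ^ (m - p) * (m.choose p : ℝ)) μ :=
    integrable_finset_sum _ fun p _ => ((hmom p).mul_const _).mul_const _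
  refine hG.mono' ((measurable_degFall lam m).comp (hmeas 0)).aestronglyMeasurable ?_
  refine Filter.Eventually.of_forall fun ω => ?_
  rw [Real.norm_eq_abs]
  calc |degFall lam (Y 0 ω) m| ≤ (|Y 0 ω| + m * |lam|) ^ m := abs_degFall_le _ _ _
    _ = _ := add_pow _ _ m

omit [IsProbabilityMeasure μ] in
lemma iIndepFun_degFall
    (hindep : iIndepFun Y μ)
    (lam : ℝ) (t : ℕ → ℕ) :
    iIndepFun (fun i ω => degFall lam (Y i ω) (t i)) μ :=
  hindep.comp _ fun i => measurable_degFall lam (t i)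

lemma integrable_prod_degFall (hmeas : ∀ i, Measurable (Y i))
    (hindep : iIndepFun Y μ)
    (hident : ∀ i, IdentDistrib (Y i) (Y 0) μ μ)
    (hmom : ∀ n : ℕ, Integrable (fun ω => |Y 0 ω| ^ n) μ) (lam : ℝ) (t : ℕ → ℕ)
    (s : Finset ℕ) :
    Integrable (fun ω => ∏ i ∈ s, degFall lam (Y i ω) (t i)) μ := by
  classical
  induction s using Finset.cons_induction with
  | empty => simpa using integrable_const (1 : ℝ)
  | cons a s has ih =>
    have hfind := (iIndepFun_degFall hindep lam t).indepFun_finset_prod_of_notMem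
      (fun i => (measurable_degFall lam (t i)).comp (hmeas i)) has
    have hZ : (∏ j ∈ s, fun ω => degFall lam (Y j ω) (t j))
        = fun ω => ∏ j ∈ s, degFall lam (Y j ω) (t j) :=
      funext fun ω => Finset.prod_apply ω s _
    have heq : (fun ω => ∏ i ∈ cons a s has, degFall lam (Y i ω) (t i))
        = fun ω => (∏ j ∈ s, fun ω' => degFall lam (Y j ω') (t j)) ω
            * degFall lam (Y a ω) (t a) := by
      funext ω
      rw [Finset.prod_cons, Finset.prod_apply]
      ring
    rw [heq]
    exact hfind.integrable_mul (hZ ▸ ih)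
      (integrable_degFall_comp hmeas hident hmom lam a (t a))

lemma integral_prod_degFall (hmeas : ∀ i, Measurable (Y i))
    (hindep : iIndepFun Y μ)
    (lam : ℝ) (t : ℕ → ℕ) (s : Finset ℕ) :
    ∫ ω, ∏ i ∈ s, degFall lam (Y i ω) (t i) ∂μ
      = ∏ i ∈ s, ∫ ω, degFall lam (Y i ω) (t i) ∂μ := by
  classical
  induction s using Finset.cons_induction with
  | empty => simp
  | cons a s has ih =>
    have hfind := (iIndepFun_degFall hindep lam t).indepFun_finset_prod_of_notMem
      (fun i => (measurable_degFall lam (t i)).comp (hmeas i)) has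
    have hZ : (∏ j ∈ s, fun ω => degFall lam (Y j ω) (t j))
        = fun ω => ∏ j ∈ s, degFall lam (Y j ω) (t j) :=
      funext fun ω => Finset.prod_apply ω s _
    have heq : (fun ω => ∏ i ∈ cons a s has, degFall lam (Y i ω) (t i))
        = fun ω => (∏ j ∈ s, fun ω' => degFall lam (Y j ω') (t j)) ω
            * degFall lam (Y a ω) (t a) := by
      funext ω
      rw [Finset.prod_cons, Finset.prod_apply]
      ring
    calc ∫ ω, ∏ i ∈ cons a s has, degFall lam (Y i ω) (t i) ∂μ
        = ∫ ω, (∏ j ∈ s, fun ω' => degFall lam (Y j ω') (t j)) ω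
            * degFall lam (Y a ω) (t a) ∂μ := by rw [← heq]
      _ = (∫ ω, (∏ j ∈ s, fun ω' => degFall lam (Y j ω') (t j)) ω ∂μ)
            * ∫ ω, degFall lam (Y a ω) (t a) ∂μ := by
          refine hfind.integral_mul_eq_mul_integral ?_ ?_
          · rw [hZ]
            exact (Finset.measurable_prod s fun i _ =>
              (measurable_degFall lam (t i)).comp (hmeas i)).aestronglyMeasurable
          · exact ((measurable_degFall lam (t a)).comp (hmeas a)).aestronglyMeasurable
      _ = ∏ i ∈ cons a s has, ∫ ω, degFall lam (Y i ω) (t i) ∂μ := by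
          rw [Finset.prod_cons, mul_comm, hZ]
          congr 1

end AuxMeas

/-- Multinomial representation of the probabilistic degenerate Stirling numbers of the
second kind: the sum ranges over all `k`-tuples of positive integers summing to `n`. -/
theorem probDegStirling_multinomial {Ω : Type*} [MeasurableSpace Ω] (μ : Measure Ω)
    [IsProbabilityMeasure μ] (Y : ℕ → Ω → ℝ)
    (hmeas : ∀ i, Measurable (Y i))
    (hindep : iIndepFun Y μ)
    (hident : ∀ i, IdentDistrib (Y i) (Y 0) μ μ)
    (hmom : ∀ n : ℕ, Integrable (fun ω => |Y 0 ω| ^ n) μ)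
    (lam : ℝ) (n k : ℕ) (hkn : k ≤ n) :
    probDegStirling μ Y lam n k =
      (1 / (Nat.factorial k : ℝ)) *
        ∑ t ∈ (Finset.Nat.antidiagonalTuple k n).filter (fun t => ∀ i, 0 < t i),
          (Nat.multinomial Finset.univ t : ℝ) *
            ∫ ω, ∏ i : Fin k, degFall lam (Y (i : ℕ) ω) (t i) ∂μ := by
  classical
  set g : ℕ → ℝ := fun m => ∫ ω, degFall lam (Y 0 ω) m ∂μ with hg
  have hg0 : g 0 = 1 := by
    simp [hg, degFall]
  have hgi : ∀ i m, ∫ ω, degFall lam (Y i ω) m ∂μ = g m := fun i m =>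
    ((hident i).comp (measurable_degFall lam m)).integral_eq
  -- Step 1: expectations of degFall of partial sums as EGF coefficients
  have hEj : ∀ j : ℕ, ∫ ω, degFall lam (∑ i ∈ Finset.range j, Y i ω) n ∂μ
      = (n.factorial : ℝ) * PowerSeries.coeff n ((egf g) ^ j) := by
    intro j
    have hptw : (fun ω => degFall lam (∑ i ∈ Finset.range j, Y i ω) n)
        = fun ω => ∑ t ∈ (Finset.range j).piAntidiag n,
            (Nat.multinomial (Finset.range j) t : ℝ)
              * ∏ i ∈ Finset.range j, degFall lam (Y i ω) (t i) :=
      funext fun ω => degFall_sum lam (Finset.range j) (fun i => Y i ω) n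
    rw [hptw, integral_finset_sum _ (fun t _ =>
      (integrable_prod_degFall hmeas hindep hident hmom lam t (Finset.range j)).const_mul _)]
    have : ∀ t ∈ (Finset.range j).piAntidiag n,
        ∫ ω, (Nat.multinomial (Finset.range j) t : ℝ)
            * ∏ i ∈ Finset.range j, degFall lam (Y i ω) (t i) ∂μ
          = (n.factorial : ℝ) * ∏ i ∈ Finset.range j, (g (t i) / (t i).factorial) := by
      intro t ht
      rw [integral_const_mul, integral_prod_degFall hmeas hindep lam t,
        Finset.prod_congr rfl (fun i _ => hgi i (t i)),
        multinomial_mul_prod_eq _ _ _ n (mem_piAntidiag.mp ht).1]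
    rw [Finset.sum_congr rfl this, ← Finset.mul_sum, ← coeff_egf_pow g (Finset.range j) n,
      Finset.card_range]
  -- Step 2: the alternating sum
  have key : ∑ j ∈ Finset.range (k + 1), (-1 : ℝ) ^ (k - j) * (Nat.choose k j : ℝ) *
        ∫ ω, degFall lam (∑ i ∈ Finset.range j, Y i ω) n ∂μ
      = ∑ t ∈ (Finset.Nat.antidiagonalTuple k n).filter (fun t => ∀ i, 0 < t i),
          (Nat.multinomial Finset.univ t : ℝ) *
            ∫ ω, ∏ i : Fin k, degFall lam (Y (i : ℕ) ω) (t i) ∂μ := by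
    have h1 : ∑ j ∈ Finset.range (k + 1), (-1 : ℝ) ^ (k - j) * (Nat.choose k j : ℝ) *
          ∫ ω, degFall lam (∑ i ∈ Finset.range j, Y i ω) n ∂μ
        = (n.factorial : ℝ) * PowerSeries.coeff n ((egf g - 1) ^ k) := by
      rw [coeff_sub_one_pow, Finset.mul_sum]
      refine Finset.sum_congr rfl fun j _ => ?_
      rw [hEj j]; ring
    have hcoe := coeff_egf_pow (fun m => if m = 0 then (0:ℝ) else g m)
      (Finset.univ : Finset (Fin k)) n
    rw [Finset.card_univ, Fintype.card_fin] at hcoe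
    rw [h1, egf_sub_one g hg0, hcoe, prod_if_zero_filter, Finset.mul_sum,
      ← Finset.piAntidiag_univ_fin_eq_antidiagonalTuple n k]
    refine Finset.sum_congr (Finset.filter_congr_decidable _ _ _) fun t ht => ?_
    have hts : ∑ i : Fin k, t i = n := by
      have := (Finset.mem_filter.mp ht).1
      exact (mem_piAntidiag.mp this).1
    -- convert the integral of the product over Fin k to g-values
    set tt : ℕ → ℕ := fun m => if h : m < k then t ⟨m, h⟩ else 0 with htt
    have htti : ∀ i : Fin k, tt (i : ℕ) = t i := fun i => by
      simp [htt, i.isLt]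
    have hint : ∫ ω, ∏ i : Fin k, degFall lam (Y (i : ℕ) ω) (t i) ∂μ
        = ∏ i : Fin k, g (t i) := by
      have hpr : ∀ ω, ∏ i : Fin k, degFall lam (Y (i : ℕ) ω) (t i)
          = ∏ i ∈ Finset.range k, degFall lam (Y i ω) (tt i) := fun ω => by
        rw [← Fin.prod_univ_eq_prod_range (fun i => degFall lam (Y i ω) (tt i)) k]
        exact Finset.prod_congr rfl fun i _ => by rw [htti i]
      calc ∫ ω, ∏ i : Fin k, degFall lam (Y (i : ℕ) ω) (t i) ∂μ
          = ∫ ω, ∏ i ∈ Finset.range k, degFall lam (Y i ω) (tt i) ∂μ := by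
            exact integral_congr_ae (Filter.Eventually.of_forall fun ω => hpr ω)
        _ = ∏ i ∈ Finset.range k, ∫ ω, degFall lam (Y i ω) (tt i) ∂μ :=
            integral_prod_degFall hmeas hindep lam tt (Finset.range k)
        _ = ∏ i ∈ Finset.range k, g (tt i) :=
            Finset.prod_congr rfl fun i _ => hgi i (tt i)
        _ = ∏ i : Fin k, g (t i) := by
            rw [← Fin.prod_univ_eq_prod_range (fun i => g (tt i)) k]
            exact Finset.prod_congr rfl fun i _ => by rw [htti i]
    rw [hint, multinomial_mul_prod_eq Finset.univ t (fun i => g (t i)) n hts]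
  rw [probDegStirling, key]
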